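/- Let (A,φ) with operators T_i, T_i^*, T_i′ satisfy conditions (C1), (C3) and (C4). Let π be a pair partition of [2n], ε ∈ {1,*,′}^{2n}, and i ∈ ℕ^{2n} a tuple with ker i = π. If there exists a block {z,w} ∈ π with z < w such that (ε(z),ε(w)) ∉ {(*,1),(*,′)}, then φ(T_{i(1)}^{ε(1)} ⋯ T_{i(2n)}^{ε(2n)}) = 0. Equivalently, φ(T_{i(1)}^{ε(1)} ⋯ T_{i(2n)}^{ε(2n)}) ≠ 0 is possible only if there is a coloring f making (π,f) an element of P^B_{2,ε}(2n). -/

import Mathlib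

open Filter
open scoped BigOperators Classical

/-- The three kinds of labels `1, ∗, ′` for the operators. -/
inductive Eps : Type
  | one
  | star
  | prime
  deriving DecidableEq

/-- `Teps T T' ε i` is the operator `T_i^ε`. -/
def Teps {A : Type*} [Ring A] [StarRing A] (T T' : ℕ → A) : Eps → ℕ → A
  | Eps.one, i => T i
  | Eps.star, i => star (T i)
  | Eps.prime, i => T' i

/-- The ordered product `T_{i(1)}^{ε(1)} ⋯ T_{i(r)}^{ε(r)}`. -/
def prodT {A : Type*} [Ring A] [StarRing A] (T T' : ℕ → A) {r : ℕ}
    (ε : Fin r → Eps) (i : Fin r → ℕ) : A :=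
  (List.ofFn fun j => Teps T T' (ε j) (i j)).prod

/-- `ker i = π` for a set partition `π` of `[r]`, encoded as a setoid on `Fin r`. -/
def kerEq {r : ℕ} (i : Fin r → ℕ) (π : Setoid (Fin r)) : Prop :=
  ∀ k l, i k = i l ↔ π.r k l

/-- Condition (C1): vanishing means and vanishing of all second mixed moments except
`φ(T_i^* T_i)` and `φ(T_i^* T_i′)`. -/
def C1 {A : Type*} [Ring A] [Algebra ℂ A] [StarRing A]
    (φ : A →ₗ[ℂ] ℂ) (T T' : ℕ → A) : Prop :=
  (∀ (i : ℕ) (e : Eps), φ (Teps T T' e i) = 0) ∧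
  (∀ (i : ℕ) (e e' : Eps), ¬ (e = Eps.star ∧ (e' = Eps.one ∨ e' = Eps.prime)) →
    φ (Teps T T' e i * Teps T T' e' i) = 0)

/-- Condition (C2): uniform bounds for moments with a fixed kernel. -/
def C2 {A : Type*} [Ring A] [Algebra ℂ A] [StarRing A]
    (φ : A →ₗ[ℂ] ℂ) (T T' : ℕ → A) : Prop :=
  ∀ (r : ℕ) (π : Setoid (Fin r)), ∃ ρ : ℝ, 0 ≤ ρ ∧
    ∀ (ε : Fin r → Eps) (i : Fin r → ℕ), kerEq i π →
      ‖φ (prodT T T' ε i)‖ ≤ ρ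

/-- Condition (C3): the state factors over interval partitions.  A word whose kernel is an
interval partition is presented as a concatenation of groups, each group having a constant
index, different groups having distinct indices. -/
def C3 {A : Type*} [Ring A] [Algebra ℂ A] [StarRing A]
    (φ : A →ₗ[ℂ] ℂ) (T T' : ℕ → A) : Prop :=
  ∀ G : List (List (Eps × ℕ)),
    (∀ g ∈ G, g ≠ [] ∧ ∃ m, ∀ x ∈ g, Prod.snd x = m) →
    (G.Pairwise fun g₁ g₂ => ∀ x₁ ∈ g₁, ∀ x₂ ∈ g₂, Prod.snd x₁ ≠ Prod.snd x₂) →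
    φ ((G.flatten.map fun x => Teps T T' x.1 x.2).prod) =
      (G.map fun g => φ ((g.map fun x => Teps T T' x.1 x.2).prod)).prod

/-- Condition (C4): commutation relations `T_i^ε T_j^{ε'} = Q_{ε,ε'}(i,j) T_j^{ε'} T_i^ε`
for `i ≠ j`. -/
def C4 {A : Type*} [Ring A] [Algebra ℂ A] [StarRing A]
    (T T' : ℕ → A) (Q : Eps → Eps → ℕ → ℕ → ℝ) : Prop :=
  ∀ (i j : ℕ), i ≠ j → ∀ (e e' : Eps),
    Teps T T' e i * Teps T T' e' j = (Q e e' i j : ℂ) • (Teps T T' e' j * Teps T T' e i)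

/-- A pair partition of `[m]`, encoded as a fixed-point-free involution `p`:
the blocks are the sets `{x, p x}`. -/
def IsPairing {m : ℕ} (p : Fin m → Fin m) : Prop :=
  ∀ x, p (p x) = x ∧ p x ≠ x

/-- A coloring `f : π → {±1}` of the blocks (encoded pointwise, constant on blocks;
`true` stands for the color `1`, `false` for the color `-1`). -/
def IsColoring {m : ℕ} (p : Fin m → Fin m) (f : Fin m → Bool) : Prop :=
  ∀ x, f (p x) = f x

/-- Membership of a colored pair partition in `P^B_{2,ε}`: on each block `{z, w}` with
`z < w` one has `ε(z) = ∗` and `ε(w) = 1` resp. `′` according to the color. -/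
def EpsCompat {m : ℕ} (ε : Fin m → Eps) (p : Fin m → Fin m) (f : Fin m → Bool) : Prop :=
  ∀ x, x < p x → ε x = Eps.star ∧ ε (p x) = (if f x then Eps.one else Eps.prime)

/-- `ker i = π` for the pair partition encoded by the involution `p`. -/
def kerPair {m : ℕ} (i : Fin m → ℕ) (p : Fin m → Fin m) : Prop :=
  ∀ k l, i k = i l ↔ (k = l ∨ p k = l)

/-- The coefficient `Ξ(π_f, i)`: a product of commutation coefficients over crossing pairs
of blocks and over nesting pairs of blocks.  Here `a, b` run over left legs of blocks. -/
noncomputable def Xi (Q : Eps → Eps → ℕ → ℕ → ℝ) {m : ℕ}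
    (p : Fin m → Fin m) (f : Fin m → Bool) (i : Fin m → ℕ) : ℝ :=
  (∏ a : Fin m, ∏ b : Fin m,
    if a < p a ∧ b < p b ∧ a < b ∧ b < p a ∧ p a < p b then
      Q Eps.star (if f a then Eps.one else Eps.prime) (i b) (i (p a)) else 1) *
  (∏ a : Fin m, ∏ b : Fin m,
    if a < p a ∧ b < p b ∧ a < b ∧ p b < p a then
      Q Eps.star Eps.star (i a) (i b) *
        Q Eps.star (if f b then Eps.one else Eps.prime) (i a) (i (p b)) else 1)

/-- The quantity whose limit (as `N → ∞`) is `λ_{π_f}` in condition (C5):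
`N^{-n} ∑_{i ∈ [N]^{2n}, ker i = π} Ξ(π_f,i) ∏_{f=1} φ(T^*T) ∏_{f=-1} φ(T^*T')`. -/
noncomputable def Ysum {A : Type*} [Ring A] [Algebra ℂ A] [StarRing A]
    (φ : A →ₗ[ℂ] ℂ) (T T' : ℕ → A) (Q : Eps → Eps → ℕ → ℕ → ℝ)
    (n N : ℕ) (p : Fin (2 * n) → Fin (2 * n)) (f : Fin (2 * n) → Bool) : ℂ :=
  ((N : ℂ) ^ n)⁻¹ *
    ∑ i ∈ (Fintype.piFinset fun _ : Fin (2 * n) => Finset.Icc 1 N).filter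
        (fun i => kerPair i p),
      ((Xi Q p f i : ℝ) : ℂ) *
        (∏ a : Fin (2 * n),
          if a < p a ∧ f a = true then φ (star (T (i a)) * T (i (p a))) else 1) *
        (∏ a : Fin (2 * n),
          if a < p a ∧ f a = false then φ (star (T (i a)) * T' (i (p a))) else 1)

/-- The normalized sum `S_N^ε = (T_1^ε + ⋯ + T_N^ε)/√N`. -/
noncomputable def SN {A : Type*} [Ring A] [Algebra ℂ A] [StarRing A]
    (T T' : ℕ → A) (e : Eps) (N : ℕ) : A :=
  ((Real.sqrt N : ℂ))⁻¹ • ∑ k ∈ Finset.Icc 1 N, Teps T T' e k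

section Aux

variable {A : Type*} [Ring A] [Algebra ℂ A]

private lemma comm_right (F : Eps × ℕ → A)
    (hcomm : ∀ x y : Eps × ℕ, x.2 ≠ y.2 → ∃ q : ℂ, F x * F y = q • (F y * F x))
    (x : Eps × ℕ) :
    ∀ (g : List (Eps × ℕ)), (∀ y ∈ g, y.2 ≠ x.2) →
      ∃ c : ℂ, F x * (g.map F).prod = c • ((g.map F).prod * F x) := by
  intro g
  induction g with
  | nil => exact fun _ => ⟨1, by simp⟩
  | cons y t ih =>
    intro h
    obtain ⟨c, hc⟩ := ih fun z hz => h z (List.mem_cons_of_mem _ hz)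
    obtain ⟨q, hq⟩ := hcomm x y fun hxy => h y (List.mem_cons_self) hxy.symm
    refine ⟨q * c, ?_⟩
    calc F x * ((y :: t).map F).prod = (F x * F y) * (t.map F).prod := by
            simp [mul_assoc]
      _ = (q • (F y * F x)) * (t.map F).prod := by rw [hq]
      _ = q • (F y * (F x * (t.map F).prod)) := by rw [smul_mul_assoc, mul_assoc]
      _ = q • (F y * (c • ((t.map F).prod * F x))) := by rw [hc]
      _ = (q * c) • (((y :: t).map F).prod * F x) := by
            rw [mul_smul_comm, smul_smul]; simp [mul_assoc]

private lemma move_front (F : Eps × ℕ → A)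
    (hcomm : ∀ x y : Eps × ℕ, x.2 ≠ y.2 → ∃ q : ℂ, F x * F y = q • (F y * F x))
    (m : ℕ) :
    ∀ L : List (Eps × ℕ), ∃ c : ℂ,
      (L.map F).prod =
        c • (((L.filter fun y => y.2 = m) ++ (L.filter fun y => y.2 ≠ m)).map F).prod := by
  intro L
  induction L with
  | nil => exact ⟨1, by simp⟩
  | cons x t ih =>
    obtain ⟨c, hc⟩ := ih
    by_cases hx : x.2 = m
    · refine ⟨c, ?_⟩
      have h1 : (x :: t).filter (fun y => y.2 = m) = x :: t.filter (fun y => y.2 = m) := by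
        rw [List.filter_cons, if_pos (by simpa using hx)]
      have h2 : (x :: t).filter (fun y => y.2 ≠ m) = t.filter (fun y => y.2 ≠ m) := by
        rw [List.filter_cons, if_neg (by simpa using hx)]
      rw [h1, h2]
      simp only [List.map_cons, List.prod_cons, List.cons_append]
      rw [hc, mul_smul_comm]
    · have hA : ∀ y ∈ t.filter (fun y => y.2 = m), y.2 ≠ x.2 := by
        intro y hy
        have := List.of_mem_filter hy
        simp only [decide_eq_true_eq] at this
        rw [this]; exact fun h => hx h.symm
      obtain ⟨c₂, hc₂⟩ := comm_right F hcomm x _ hA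
      refine ⟨c * c₂, ?_⟩
      have h1 : (x :: t).filter (fun y => y.2 = m) = t.filter (fun y => y.2 = m) := by
        rw [List.filter_cons, if_neg (by simpa using hx)]
      have h2 : (x :: t).filter (fun y => y.2 ≠ m) = x :: t.filter (fun y => y.2 ≠ m) := by
        rw [List.filter_cons, if_pos (by simpa using hx)]
      rw [h1, h2]
      calc ((x :: t).map F).prod = F x * (t.map F).prod := by simp
        _ = F x * (c • (((t.filter fun y => y.2 = m) ++ (t.filter fun y => y.2 ≠ m)).map F).prod) := by rw [hc]
        _ = c • (F x * ((((t.filter fun y => y.2 = m)).map F).prod * (((t.filter fun y => y.2 ≠ m)).map F).prod)) := by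
              rw [mul_smul_comm]; simp
        _ = c • ((F x * (((t.filter fun y => y.2 = m)).map F).prod) * (((t.filter fun y => y.2 ≠ m)).map F).prod) := by
              rw [mul_assoc]
        _ = c • ((c₂ • ((((t.filter fun y => y.2 = m)).map F).prod * F x)) * (((t.filter fun y => y.2 ≠ m)).map F).prod) := by
              rw [hc₂]
        _ = (c * c₂) • ((((t.filter fun y => y.2 = m)) ++ x :: (t.filter fun y => y.2 ≠ m)).map F).prod := by
              rw [smul_mul_assoc, smul_smul]; simp [mul_assoc]

private lemma reorder (F : Eps × ℕ → A)
    (hcomm : ∀ x y : Eps × ℕ, x.2 ≠ y.2 → ∃ q : ℂ, F x * F y = q • (F y * F x)) :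
    ∀ (N : ℕ) (L : List (Eps × ℕ)), L.length ≤ N →
      ∃ (c : ℂ) (G : List (List (Eps × ℕ))),
        (∀ g ∈ G, ∃ m, g = L.filter (fun y => y.2 = m) ∧ g ≠ []) ∧
        (G.Pairwise fun g₁ g₂ => ∀ x₁ ∈ g₁, ∀ x₂ ∈ g₂, x₁.2 ≠ x₂.2) ∧
        (∀ m, L.filter (fun y => y.2 = m) ≠ [] → L.filter (fun y => y.2 = m) ∈ G) ∧
        (L.map F).prod = c • ((G.flatten.map F).prod) := by
  intro N
  induction N with
  | zero =>
    intro L hL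
    have hLnil : L = [] := List.eq_nil_of_length_eq_zero (Nat.le_zero.mp hL)
    subst hLnil
    exact ⟨1, [], by simp, by simp, by simp, by simp⟩
  | succ N ih =>
    intro L hL
    match L with
    | [] => exact ⟨1, [], by simp, by simp, by simp, by simp⟩
    | x :: t =>
      obtain ⟨c₁, hc₁⟩ := move_front F hcomm x.2 (x :: t)
      have hlen : (t.filter fun y => y.2 ≠ x.2).length ≤ N :=
        le_trans (List.length_filter_le _ _) (Nat.succ_le_succ_iff.mp (by simpa using hL))
      obtain ⟨c₂, G₂, hG1, hG2, hG3, hG4⟩ := ih _ hlen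
      have keyA : (x :: t).filter (fun y => y.2 = x.2) = x :: t.filter (fun y => y.2 = x.2) := by
        rw [List.filter_cons, if_pos (by simp)]
      have keyB : ∀ m, m ≠ x.2 →
          (x :: t).filter (fun y => y.2 = m) = (t.filter fun y => y.2 ≠ x.2).filter (fun y => y.2 = m) := by
        intro m hm
        rw [List.filter_filter, List.filter_cons, if_neg (by simpa using Ne.symm hm)]
        apply List.filter_congr
        intro y _
        by_cases hy : y.2 = m
        · have hy2 : y.2 ≠ x.2 := by rw [hy]; exact hm
          simp [hy, hy2, hm]
        · simp [hy]
      refine ⟨c₁ * c₂, (x :: t.filter (fun y => y.2 = x.2)) :: G₂, ?_, ?_, ?_, ?_⟩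
      · intro g hg
        rcases List.mem_cons.mp hg with rfl | hg'
        · exact ⟨x.2, keyA.symm, by simp⟩
        · obtain ⟨m, hgm, hgne⟩ := hG1 g hg'
          have hmne : m ≠ x.2 := by
            obtain ⟨y, hy⟩ := List.exists_mem_of_ne_nil g hgne
            have hy' := hy; rw [hgm] at hy'
            have h1 := List.of_mem_filter hy'
            have h2 := List.of_mem_filter (List.mem_of_mem_filter hy')
            simp only [decide_eq_true_eq] at h1 h2
            exact fun h => h2 (h1.trans h)
          exact ⟨m, by rw [hgm, keyB m hmne], hgne⟩
      · constructor
        · intro g hg x₂ hx₂ y hy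
          obtain ⟨m, hgm, _⟩ := hG1 g hg
          have hy' := hy; rw [hgm] at hy'
          have h2 := List.of_mem_filter (List.mem_of_mem_filter hy')
          simp only [decide_eq_true_eq] at h2
          have hx₂2 : x₂.2 = x.2 := by
            rcases List.mem_cons.mp hx₂ with rfl | hx₂'
            · rfl
            · have := List.of_mem_filter hx₂'
              simpa using this
          rw [hx₂2]; exact fun h => h2 h.symm
        · exact hG2
      · intro m hm
        by_cases hmx : m = x.2
        · subst hmx; rw [keyA]; exact List.mem_cons_self
        · rw [keyB m hmx] at hm ⊢
          exact List.mem_cons_of_mem _ (hG3 m hm)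
      · have hBne : (x :: t).filter (fun y => y.2 ≠ x.2) = t.filter (fun y => y.2 ≠ x.2) := by
          rw [List.filter_cons, if_neg (by simp)]
        rw [hc₁, keyA, hBne, List.flatten_cons, List.map_append, List.prod_append,
          List.map_append, List.prod_append, hG4, mul_smul_comm, smul_smul]

private lemma filter_single' {α : Type*} (pr : α → Bool) (w : α) :
    ∀ l : List α, (∀ j ∈ l, pr j = true ↔ j = w) → l.Nodup → w ∈ l → l.filter pr = [w] := by
  intro l
  induction l with
  | nil => intro _ _ h; cases h
  | cons y t ih =>
    intro hpr hnd hw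
    by_cases hy : y = w
    · subst hy
      rw [List.filter_cons, if_pos ((hpr y (List.mem_cons_self)).mpr rfl)]
      have ht : t.filter pr = [] := by
        apply List.filter_eq_nil_iff.mpr
        intro a ha hpa
        have : a = y := (hpr a (List.mem_cons_of_mem _ ha)).mp hpa
        exact (List.nodup_cons.mp hnd).1 (this ▸ ha)
      rw [ht]
    · have hwt : w ∈ t := by
        rcases List.mem_cons.mp hw with rfl | h
        · exact absurd rfl hy
        · exact h
      rw [List.filter_cons, if_neg (fun h => hy ((hpr y (List.mem_cons_self)).mp h))]
      exact ih (fun j hj => hpr j (List.mem_cons_of_mem _ hj)) (List.nodup_cons.mp hnd).2 hwt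

private lemma filter_pair' {α : Type*} [LinearOrder α] (pr : α → Bool) (z w : α) :
    ∀ l : List α, (∀ j ∈ l, pr j = true ↔ (j = z ∨ j = w)) → l.Pairwise (· < ·) →
      z < w → z ∈ l → w ∈ l → l.filter pr = [z, w] := by
  intro l
  induction l with
  | nil => intro _ _ _ hz _; exact absurd hz (List.not_mem_nil)
  | cons x t ih =>
    intro hpr hp hzw hz hw
    have hlt := (List.pairwise_cons.mp hp).1
    have hpt := (List.pairwise_cons.mp hp).2
    by_cases hxz : x = z
    · subst hxz
      have hwt : w ∈ t := by
        rcases List.mem_cons.mp hw with rfl | h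
        · exact absurd hzw (lt_irrefl _)
        · exact h
      have hnd : t.Nodup := hpt.imp ne_of_lt
      rw [List.filter_cons, if_pos ((hpr x (List.mem_cons_self)).mpr (Or.inl rfl))]
      congr 1
      apply filter_single' pr w t _ hnd hwt
      intro j hj
      rw [hpr j (List.mem_cons_of_mem _ hj)]
      have hjx : j ≠ x := fun h => absurd (h ▸ hlt j hj) (lt_irrefl _)
      exact ⟨fun h => h.resolve_left hjx, Or.inr⟩
    · by_cases hxw : x = w
      · subst hxw
        have hzt : z ∈ t := by
          rcases List.mem_cons.mp hz with rfl | h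
          · exact absurd hzw (lt_irrefl _)
          · exact h
        exact absurd (hlt z hzt) (not_lt.mpr hzw.le)
      · have hzt : z ∈ t := by
          rcases List.mem_cons.mp hz with rfl | h
          · exact absurd rfl hxz
          · exact h
        have hwt : w ∈ t := by
          rcases List.mem_cons.mp hw with rfl | h
          · exact absurd rfl hxw
          · exact h
        rw [List.filter_cons, if_neg (fun h =>
          ((hpr x (List.mem_cons_self)).mp h).elim hxz hxw)]
        exact ih (fun j hj => hpr j (List.mem_cons_of_mem _ hj)) hpt hzw hzt hwt

end Aux

/-- under (C1), (C3), (C4), if `ker i` is a pair partition `π` and some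
block `{z,w}` (with `z < w`) has `(ε(z), ε(w)) ∉ {(∗,1),(∗,′)}`, then the corresponding
moment vanishes; i.e. a nonzero moment forces a coloring `f` with `(π,f) ∈ P^B_{2,ε}`. -/
theorem stmt5 {A : Type*} [Ring A] [Algebra ℂ A] [StarRing A]
    (φ : A →ₗ[ℂ] ℂ) (hφ1 : φ 1 = 1) (T T' : ℕ → A) (Q : Eps → Eps → ℕ → ℕ → ℝ)
    (hC1 : C1 φ T T') (hC3 : C3 φ T T') (hC4 : C4 T T' Q)
    (n : ℕ) (p : Fin (2 * n) → Fin (2 * n)) (hp : IsPairing p)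
    (ε : Fin (2 * n) → Eps) (i : Fin (2 * n) → ℕ) (hker : kerPair i p)
    (hbad : ∃ z : Fin (2 * n), z < p z ∧
      ¬ (ε z = Eps.star ∧ (ε (p z) = Eps.one ∨ ε (p z) = Eps.prime))) :
    φ (prodT T T' ε i) = 0 := by
  classical
  obtain ⟨z, hzlt, hzbad⟩ := hbad
  have hcomm : ∀ x y : Eps × ℕ, x.2 ≠ y.2 →
      ∃ q : ℂ, (fun y : Eps × ℕ => Teps T T' y.1 y.2) x * (fun y : Eps × ℕ => Teps T T' y.1 y.2) y
        = q • ((fun y : Eps × ℕ => Teps T T' y.1 y.2) y * (fun y : Eps × ℕ => Teps T T' y.1 y.2) x) :=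
    fun x y h => ⟨Q x.1 y.1 x.2 y.2, hC4 x.2 y.2 h x.1 y.1⟩
  have hipz : i (p z) = i z := (hker (p z) z).mpr (Or.inr (hp z).1)
  have hfilter : (List.ofFn fun j => (ε j, i j)).filter (fun y => y.2 = i z)
      = [(ε z, i z), (ε (p z), i (p z))] := by
    rw [List.ofFn_eq_map, List.filter_map]
    rw [filter_pair' _ z (p z) (List.finRange (2*n)) ?_ (List.pairwise_lt_finRange _) hzlt
      (List.mem_finRange z) (List.mem_finRange (p z))]
    · rfl
    · intro j _
      show decide (i j = i z) = true ↔ (j = z ∨ j = p z)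
      rw [decide_eq_true_eq, hker j z]
      constructor
      · rintro (rfl | h)
        · exact Or.inl rfl
        · right; rw [← h, (hp j).1]
      · rintro (rfl | rfl)
        · exact Or.inl rfl
        · right; exact (hp z).1
  obtain ⟨c, G, H1, H2, H3, H4⟩ := reorder (fun y : Eps × ℕ => Teps T T' y.1 y.2) hcomm
    (List.ofFn fun j => (ε j, i j)).length (List.ofFn fun j => (ε j, i j)) le_rfl
  have hprod : prodT T T' ε i
      = ((List.ofFn fun j => (ε j, i j)).map fun y : Eps × ℕ => Teps T T' y.1 y.2).prod := by
    rw [List.map_ofFn]; rfl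
  have hg₀ : (List.ofFn fun j => (ε j, i j)).filter (fun y => y.2 = i z) ∈ G :=
    H3 (i z) (by rw [hfilter]; simp)
  have hGhyp : ∀ g ∈ G, g ≠ [] ∧ ∃ m, ∀ x ∈ g, Prod.snd x = m := by
    intro g hg
    obtain ⟨m, hgm, hgne⟩ := H1 g hg
    refine ⟨hgne, m, ?_⟩
    intro x hx
    rw [hgm] at hx
    have := List.of_mem_filter hx
    simpa using this
  have hC3' := hC3 G hGhyp H2
  rw [hprod, H4, map_smul, smul_eq_mul, hC3']
  have hzero : φ ((((List.ofFn fun j => (ε j, i j)).filter (fun y => y.2 = i z)).map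
      fun x : Eps × ℕ => Teps T T' x.1 x.2).prod) = 0 := by
    rw [hfilter]
    simp only [List.map_cons, List.map_nil, List.prod_cons, List.prod_nil, mul_one]
    rw [hipz]
    exact hC1.2 (i z) (ε z) (ε (p z)) hzbad
  have hmem : (0:ℂ) ∈ G.map (fun g => φ ((g.map fun x : Eps × ℕ => Teps T T' x.1 x.2).prod)) :=
    List.mem_map.mpr ⟨_, hg₀, hzero⟩
  rw [List.prod_eq_zero hmem, mul_zero]
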